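/- Let A be a Young function, a = A', and suppose t·a(t) ≤ p·A(t) for all t > 0, where p > 1. Let Ω be a bounded open set, u a weak eigenfunction of the a-Laplacian with eigenvalue λ(α), normalized so that ∫_Ω A(|u|)dx = α and ∫_Ω A(|∇u|)dx = E(α). Then (1/p)·E(α)/α ≤ λ(α) ≤ p·E(α)/α. -/
import Mathlib


open MeasureTheory

/-- Let A be a Young function with t·a(t) ≤ p·A(t) (p > 1), Ω bounded open,
u a weak eigenfunction of the a-Laplacian, i.e. a minimizer of E(α) whose eigenvalue is
λ(α) = (∫_Ω a(|∇u|)|∇u|)/(∫_Ω a(|u|)|u|), normalized so that ∫_Ω A(|u|) = α and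
∫_Ω A(|∇u|) = E(α).  Then (1/p)·E(α)/α ≤ λ(α) ≤ p·E(α)/α. -/
theorem eigenvalue_energy_comparison {n : ℕ} (A a : ℝ → ℝ) (p : ℝ)
    (hA : ∀ t : ℝ, A t = ∫ τ in (0:ℝ)..t, a τ)
    (hamono : MonotoneOn a (Set.Ici 0)) (ha0 : a 0 = 0)
    (hapos : ∀ t > (0:ℝ), 0 < a t)
    (hp : 1 < p)
    (hΔ : ∀ t > (0:ℝ), t * a t ≤ p * A t)
    (Ω : Set (EuclideanSpace ℝ (Fin n))) (hΩo : IsOpen Ω) (hΩb : Bornology.IsBounded Ω)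
    (u : EuclideanSpace ℝ (Fin n) → ℝ) (hu : Differentiable ℝ u)
    (α Eα lam : ℝ) (hα : 0 < α)
    (hnorm : ∫ x in Ω, A |u x| = α)
    (henergy : ∫ x in Ω, A ‖fderiv ℝ u x‖ = Eα)
    (hint1 : IntegrableOn (fun x => A |u x|) Ω)
    (hint2 : IntegrableOn (fun x => A ‖fderiv ℝ u x‖) Ω)
    (hint3 : IntegrableOn (fun x => a |u x| * |u x|) Ω)
    (hint4 : IntegrableOn (fun x => a ‖fderiv ℝ u x‖ * ‖fderiv ℝ u x‖) Ω)
    (hden : 0 < ∫ x in Ω, a |u x| * |u x|)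
    (hlam : lam = (∫ x in Ω, a ‖fderiv ℝ u x‖ * ‖fderiv ℝ u x‖) /
                  (∫ x in Ω, a |u x| * |u x|)) :
    (1 / p) * (Eα / α) ≤ lam ∧ lam ≤ p * (Eα / α) := by
  have hp0 : (0:ℝ) < p := lt_trans one_pos hp
  have ha_nonneg : ∀ t, 0 ≤ t → 0 ≤ a t := by
    intro t ht
    rcases eq_or_lt_of_le ht with h | h
    · simp [← h, ha0]
    · exact (hapos t h).le
  have hA_nonneg : ∀ t, 0 ≤ t → 0 ≤ A t := by
    intro t ht
    rw [hA]
    exact intervalIntegral.integral_nonneg ht fun τ hτ => ha_nonneg τ hτ.1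
  have hA_le : ∀ t, 0 ≤ t → A t ≤ a t * t := by
    intro t ht
    rw [hA]
    have hsub : Set.uIcc (0:ℝ) t ⊆ Set.Ici 0 := by
      rw [Set.uIcc_of_le ht]
      exact fun x hx => hx.1
    have h1 : IntervalIntegrable a MeasureTheory.volume 0 t :=
      (hamono.mono hsub).intervalIntegrable
    have h2 : (∫ τ in (0:ℝ)..t, a t) = a t * t := by
      simp [mul_comm]
    calc (∫ τ in (0:ℝ)..t, a τ) ≤ ∫ τ in (0:ℝ)..t, a t := by
          apply intervalIntegral.integral_mono_on ht h1 intervalIntegrable_const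
          intro x hx
          exact hamono hx.1 (le_trans hx.1 hx.2) hx.2
      _ = a t * t := h2
  have hle_p : ∀ t, 0 ≤ t → a t * t ≤ p * A t := by
    intro t ht
    rcases eq_or_lt_of_le ht with h | h
    · simp [← h, ha0, hA]
    · rw [mul_comm]; exact hΔ t h
  have hΩm : MeasurableSet Ω := hΩo.measurableSet
  set N := ∫ x in Ω, a ‖fderiv ℝ u x‖ * ‖fderiv ℝ u x‖ with hN
  set D := ∫ x in Ω, a |u x| * |u x| with hD
  have hαD : α ≤ D := by
    rw [← hnorm]
    exact setIntegral_mono_on hint1 hint3 hΩm fun x _ => hA_le _ (abs_nonneg _)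
  have hDpα : D ≤ p * α := by
    rw [← hnorm, ← integral_const_mul]
    exact setIntegral_mono_on hint3 (hint1.const_mul p) hΩm fun x _ =>
      hle_p _ (abs_nonneg _)
  have hEN : Eα ≤ N := by
    rw [← henergy]
    exact setIntegral_mono_on hint2 hint4 hΩm fun x _ => hA_le _ (norm_nonneg _)
  have hNpE : N ≤ p * Eα := by
    rw [← henergy, ← integral_const_mul]
    exact setIntegral_mono_on hint4 (hint2.const_mul p) hΩm fun x _ =>
      hle_p _ (norm_nonneg _)
  have hE0 : 0 ≤ Eα := by
    rw [← henergy]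
    exact setIntegral_nonneg hΩm fun x _ => hA_nonneg _ (norm_nonneg _)
  have hN0 : 0 ≤ N := le_trans hE0 hEN
  constructor
  · have h1 : (1 / p) * (Eα / α) = Eα / (p * α) := by
      field_simp
    rw [h1, hlam, div_le_div_iff₀ (by positivity) hden]
    exact mul_le_mul hEN hDpα hden.le hN0
  · have h1 : p * (Eα / α) = (p * Eα) / α := by ring
    rw [h1, hlam, div_le_div_iff₀ hden hα]
    exact mul_le_mul hNpE hαD hα.le (by positivity)
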